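/- Let Π be an invertible matrix that maps every block-diagonal matrix diag(C, C, …, C) (R diagonal blocks, each equal to an arbitrary J×K matrix C) to another block-diagonal matrix with R blocks of size J×K, via a block-wise permutation of the R row-blocks: Π diag(Ĉ^(1),…,Ĉ^(R)) = diag(C,…,C) where Π permutes the J-row blocks. If this holds for all C ranging over a set of matrices whose generic member has no zero rows, then Π is the identity permutation, i.e. Π = I_{JR}. -/

import Mathlib

open Matrix

noncomputable section

/-- let `Π` be the block permutation matrix associated with a permutation
`σ` of the `R` blocks (each block consisting of `J` rows).  If for every `C` with no zero
rows there are blocks `Ĉ^(1),…,Ĉ^(R)` with `Π · diag(Ĉ^(1),…,Ĉ^(R)) = diag(C,…,C)`,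
then `Π = I_{JR}`. -/
theorem block_permutation_is_identity {R J K : ℕ} (hK : 0 < K)
    (σ : Equiv.Perm (Fin R))
    (P : Matrix (Fin J × Fin R) (Fin J × Fin R) ℝ)
    (hP : ∀ p q, P p q = if q.1 = p.1 ∧ q.2 = σ p.2 then 1 else 0)
    (h : ∀ C : Matrix (Fin J) (Fin K) ℝ, (∀ i, ∃ k, C i k ≠ 0) →
      ∃ Ch : Fin R → Matrix (Fin J) (Fin K) ℝ,
        P * Matrix.blockDiagonal Ch = Matrix.blockDiagonal (fun _ => C)) :
    P = 1 := by
  ext p q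
  obtain ⟨j, r⟩ := p
  have hk0 : (⟨0, hK⟩ : Fin K) = ⟨0, hK⟩ := rfl
  obtain ⟨Ch, hCh⟩ := h (fun _ _ => 1) (fun i => ⟨⟨0, hK⟩, one_ne_zero⟩)
  have key : σ r = r := by
    by_contra hne
    have := congrFun (congrFun hCh (j, r)) (⟨0, hK⟩, r)
    simp only [Matrix.mul_apply, hP, Matrix.blockDiagonal_apply] at this
    rw [Finset.sum_eq_zero (fun x _ => ?_)] at this
    · exact zero_ne_one (this.trans (if_pos rfl))
    · split_ifs with h1 h2
      · exact absurd (h1.2.symm.trans h2) hne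
      all_goals simp
  rw [hP, Matrix.one_apply, key]
  congr 1
  simp [eq_comm, Prod.ext_iff, and_comm]
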